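/- Let V and I be disjoint finite sets. If π : D_p^V × C_2^I → D_p is a surjective group homomorphism with kernel N, then there exists v ∈ V such that N = ker(π_v), where π_v is the projection onto the v coordinate. -/

import Mathlib

open DihedralGroup in
/-- Fix an odd prime `p`, with `C_2 = {±1} = ℤˣ` and `D_p` the dihedral
group of order `2p`.  Let `V` and `I` be (disjoint) finite sets.  If
`π : D_p^V × C_2^I → D_p` is a surjective group homomorphism with kernel `N`, then there is
some `v ∈ V` such that `N = ker (π_v)`, where `π_v` is the projection onto the `v`
coordinate. -/
theorem statement_2 (p : ℕ) (hp : p.Prime) (hodd : Odd p)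
    (V I : Type) [Finite V] [Finite I]
    (π : ((V → DihedralGroup p) × (I → ℤˣ)) →* DihedralGroup p)
    (hsurj : Function.Surjective π) :
    ∃ v : V, π.ker =
      ((Pi.evalMonoidHom (fun _ : V => DihedralGroup p) v).comp
        (MonoidHom.fst (V → DihedralGroup p) (I → ℤˣ))).ker := by
  classical
  haveI : Fact p.Prime := ⟨hp⟩
  haveI : NeZero p := ⟨hp.ne_zero⟩
  haveI := Fintype.ofFinite V
  have hpne2 : p ≠ 2 := by
    rintro rfl
    simp [Nat.odd_iff] at hodd
  have h2 : (2 : ZMod p) ≠ 0 := by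
    intro h
    have hd : (p : ℕ) ∣ 2 := (ZMod.natCast_eq_zero_iff 2 p).mp (by exact_mod_cast h)
    exact hpne2 ((Nat.prime_dvd_prime_iff_eq hp Nat.prime_two).mp hd)
  have halv : ∀ x : ZMod p, x + x = 0 → x = 0 := by
    intro x hx
    have hm : (2 : ZMod p) * x = 0 := by linear_combination hx
    rcases mul_eq_zero.mp hm with h | h
    · exact absurd h h2
    · exact h
  -- Step 1: the second factor dies
  obtain ⟨c, hc⟩ := hsurj (r 1)
  have hker2 : ∀ u : I → ℤˣ, π (1, u) = 1 := by
    intro u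
    have hcm : π (1, u) * r 1 = r 1 * π (1, u) := by
      rw [← hc, ← map_mul, ← map_mul]
      congr 1
      ext : 1
      · simp
      · simp [mul_comm]
    have hsq : π (1, u) * π (1, u) = 1 := by
      rw [← map_mul]
      have hone : ((1 : V → DihedralGroup p), u) * (1, u) = 1 := by
        ext i : 2
        · simp
        · simp [Int.units_mul_self]
      rw [hone, map_one]
    rcases hu : π (1, u) with j | j
    · rw [hu, r_mul_r, one_def] at hsq
      have hj : j + j = 0 := by injection hsq
      rw [halv j hj, ← one_def]
    · rw [hu, sr_mul_r, r_mul_sr] at hcm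
      have hj : j + 1 = j - 1 := by injection hcm
      exact absurd (halv 1 (by linear_combination hj)) one_ne_zero
  -- φ : restriction to the first factor; π factors through it
  set φ : (V → DihedralGroup p) →* DihedralGroup p :=
    π.comp (MonoidHom.inl _ _) with hφdef
  have hφ : ∀ x : (V → DihedralGroup p) × (I → ℤˣ), π x = φ x.1 := by
    rintro ⟨f, u⟩
    have hx : π (f, u) = π (f, 1) * π (1, u) := by
      rw [← map_mul]
      congr 1
      ext <;> simp
    rw [hx, hker2, mul_one]
    rfl
  have hφs : Function.Surjective φ := by
    intro d
    obtain ⟨x, hx⟩ := hsurj d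
    exact ⟨x.1, by rw [← hφ x]; exact hx⟩
  -- the coordinate homomorphisms
  set σ : V → (DihedralGroup p →* DihedralGroup p) :=
    fun w => φ.comp (MonoidHom.mulSingle (fun _ : V => DihedralGroup p) w) with hσdef
  have hσ : ∀ w d, σ w d = φ (Pi.mulSingle w d) := fun w d => rfl
  -- if all coordinates die, the product dies
  have honeφ : ∀ f : V → DihedralGroup p, (∀ w, σ w (f w) = 1) → φ f = 1 := by
    intro f hf
    conv_lhs => rw [← Finset.noncommProd_mulSingle f]
    erw [Finset.map_noncommProd]
    exact Finset.noncommProd_induction _ _ _ (· = 1)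
      (fun a b ha hb => by rw [ha, hb, one_mul]) rfl (fun w _ => hf w)
  -- notation
  set k : V → DihedralGroup p := fun w => σ w (r 1) with hkdef
  set s : V → DihedralGroup p := fun w => σ w (sr 0) with hsdef
  -- k w is a rotation
  have hkrot : ∀ w, ∃ a, k w = r a := by
    intro w
    have hkp : k w ^ p = 1 := by
      show σ w (r 1) ^ p = 1
      rw [← map_pow, r_one_pow, ZMod.natCast_self, ← one_def, map_one]
    rcases hw : k w with a | a
    · exact ⟨a, rfl⟩
    · exfalso
      rw [hw] at hkp
      have hdvd := orderOf_dvd_of_pow_eq_one hkp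
      rw [DihedralGroup.orderOf_sr] at hdvd
      rw [Nat.odd_iff] at hodd
      omega
  -- s w squares to 1
  have hssq : ∀ w, s w * s w = 1 := by
    intro w
    show σ w (sr 0) * σ w (sr 0) = 1
    rw [← map_mul, sr_mul_sr, sub_self, ← one_def, map_one]
  -- s w is 1 or a reflection
  have hscase : ∀ w, s w = 1 ∨ ∃ t, s w = sr t := by
    intro w
    rcases hw : s w with t | t
    · left
      have hq := hssq w
      rw [hw, r_mul_r, one_def] at hq
      have ht : t + t = 0 := by injection hq
      rw [halv t ht, ← one_def]
    · exact Or.inr ⟨t, rfl⟩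
  -- conjugation relation
  have hconj : ∀ w, s w * k w * s w * k w = 1 := by
    intro w
    show σ w (sr 0) * σ w (r 1) * σ w (sr 0) * σ w (r 1) = 1
    rw [← map_mul, ← map_mul, ← map_mul, sr_mul_r, sr_mul_sr, r_mul_r]
    norm_num
  -- if s w = 1 then k w = 1
  have hs1k : ∀ w, s w = 1 → k w = 1 := by
    intro w hw
    have hq := hconj w
    rw [hw, one_mul, mul_one] at hq
    obtain ⟨a, ha⟩ := hkrot w
    rw [ha, r_mul_r, one_def] at hq
    have ha2 : a + a = 0 := by injection hq
    rw [ha, halv a ha2, ← one_def]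
  -- if s w is a reflection then k x = 1 for x ≠ w
  have hsk : ∀ w x, w ≠ x → (∃ t, s w = sr t) → k x = 1 := by
    intro w x hwx ⟨t, ht⟩
    have hcomm : s w * k x = k x * s w := by
      show σ w (sr 0) * σ x (r 1) = σ x (r 1) * σ w (sr 0)
      rw [hσ, hσ, ← map_mul, ← map_mul,
        (Pi.mulSingle_commute (f := fun _ : V => DihedralGroup p) hwx (sr 0) (r 1)).eq]
    obtain ⟨a, ha⟩ := hkrot x
    rw [ht, ha, sr_mul_r, r_mul_sr] at hcomm
    have hta : t + a = t - a := by injection hcomm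
    have ha0 : a = 0 := halv a (by linear_combination hta)
    rw [ha, ha0, ← one_def]
  -- not all k w are trivial
  have hex : ∃ v, k v ≠ 1 := by
    by_contra hall
    push_neg at hall
    obtain ⟨f, hf⟩ := hφs (r 1)
    have hsq1 : φ (f * f) = 1 := by
      apply honeφ
      intro w
      have : σ w (f w * f w) = 1 := by
        rcases hfw : f w with j | j
        · rw [r_mul_r]
          have : σ w (r (j + j)) = σ w ((r 1) ^ (j + j).val) := by
            rw [r_one_pow, ZMod.natCast_val, ZMod.cast_id]
          rw [this, map_pow]
          rw [show σ w (r 1) = k w from rfl, hall w, one_pow]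
        · rw [sr_mul_sr, sub_self, ← one_def, map_one]
      simpa using this
    rw [map_mul, hf, r_mul_r, one_def] at hsq1
    have h11 : (1 : ZMod p) + 1 = 0 := by injection hsq1
    exact absurd (halv 1 h11) one_ne_zero
  obtain ⟨v, hv⟩ := hex
  -- s v is a reflection
  have hsv : ∃ t, s v = sr t := by
    rcases hscase v with h | h
    · exact absurd (hs1k v h) hv
    · exact h
  -- for x ≠ v, σ x is trivial
  have htriv : ∀ x, x ≠ v → ∀ d, σ x d = 1 := by
    intro x hx d
    have hkx : k x = 1 := hsk v x (Ne.symm hx) hsv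
    have hsx : s x = 1 := by
      rcases hscase x with h | h
      · exact h
      · exact absurd (hsk x v hx h) hv
    have hr : ∀ j : ZMod p, σ x (r j) = 1 := by
      intro j
      have : σ x (r j) = σ x ((r 1) ^ j.val) := by
        rw [r_one_pow, ZMod.natCast_val, ZMod.cast_id]
      rw [this, map_pow, show σ x (r 1) = k x from rfl, hkx, one_pow]
    rcases d with j | j
    · exact hr j
    · have : (sr j : DihedralGroup p) = sr 0 * r j := by rw [sr_mul_r, zero_add]
      rw [this, map_mul, hr j, mul_one]
      exact hsx
  -- π factors through the v coordinate
  have hπv : ∀ x : (V → DihedralGroup p) × (I → ℤˣ), π x = σ v (x.1 v) := by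
    intro x
    rw [hφ x]
    have hg : φ ((Pi.mulSingle v (x.1 v))⁻¹ * x.1) = 1 := by
      apply honeφ
      intro w
      by_cases hw : w = v
      · subst hw
        simp
      · have h1 : ((Pi.mulSingle (M := fun _ : V => DihedralGroup p) v (x.1 v))⁻¹ * x.1) w
            = x.1 w := by
          simp [Pi.mulSingle_eq_of_ne hw]
        rw [h1]
        exact htriv w hw _
    conv_lhs => rw [show x.1 = Pi.mulSingle v (x.1 v) * ((Pi.mulSingle v (x.1 v))⁻¹ * x.1) from
      (mul_inv_cancel_left _ _).symm]
    rw [map_mul, hg, mul_one, ← hσ]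
  -- σ v is injective
  have hσvs : Function.Surjective (σ v) := by
    intro d
    obtain ⟨x, hx⟩ := hsurj d
    exact ⟨x.1 v, by rw [← hπv x]; exact hx⟩
  have hσvi : Function.Injective (σ v) := Finite.injective_iff_surjective.mpr hσvs
  refine ⟨v, ?_⟩
  ext x
  simp only [MonoidHom.mem_ker, MonoidHom.comp_apply, MonoidHom.coe_fst, Pi.evalMonoidHom_apply]
  constructor
  · intro hx
    have : σ v (x.1 v) = σ v 1 := by rw [← hπv x, hx, map_one]
    exact hσvi this
  · intro hx
    rw [hπv x, hx, map_one]
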